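/- Let ℓ ≥ 1, k ≥ 0, 1 ≤ p ≤ ℓ, and let μ = (c_1, ..., c_n) be integers with ℓ ≥ c_1 ≥ c_2 ≥ ... ≥ c_n ≥ 0 and Σ_{i=1}^n c_i = 2(kℓ + p). Set Λ = Σ_{i=2k+2}^n c_i (with Λ = 0 if 2k+2 > n). If Λ = p, then there exists exactly one semistandard Young tableau of shape ϱ = (ℓ^{2k}, p, p) with content μ, and this unique tableau is proper. -/

import Mathlib

/-- `IsSSYT R C r n c T` : the filling `T` (entry `T a b` in row `a`, column `b`,
both 1-indexed) is a semistandard Young tableau of the shape whose `a`-th row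
(for `1 ≤ a ≤ R`) consists of the boxes `(a, b)` with `1 ≤ b ≤ r a` (where
`r a ≤ C`), with entries in `{1, ..., n}`, rows weakly increasing, columns
strictly increasing, and using exactly `c i` entries equal to `i` for each
`1 ≤ i ≤ n`. -/
def IsSSYT (R C : ℕ) (r : ℕ → ℕ) (n : ℕ) (c : ℕ → ℕ) (T : ℕ → ℕ → ℕ) : Prop :=
  (∀ a ∈ Finset.Icc 1 R, ∀ b ∈ Finset.Icc 1 (r a), 1 ≤ T a b ∧ T a b ≤ n) ∧
  (∀ a ∈ Finset.Icc 1 R, ∀ b b' : ℕ, 1 ≤ b → b ≤ b' → b' ≤ r a → T a b ≤ T a b') ∧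
  (∀ a : ℕ, 1 ≤ a → a + 1 ≤ R → ∀ b : ℕ, 1 ≤ b → b ≤ r a → b ≤ r (a + 1) →
    T a b < T (a + 1) b) ∧
  (∀ i : ℕ, 1 ≤ i → i ≤ n →
    ((Finset.Icc 1 R ×ˢ Finset.Icc 1 C).filter
      (fun q => q.2 ≤ r q.1 ∧ T q.1 q.2 = i)).card = c i)

/-- Row lengths of the shape `ϱ = (ℓ^{2k}, p, p)`: rows `1, ..., 2k` have length `ℓ`
and rows `2k+1`, `2k+2` have length `p`. -/
def rhoRow (l k p : ℕ) (a : ℕ) : ℕ := if a ≤ 2 * k then l else p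

/-- A semistandard Young tableau of shape `ϱ = (ℓ^{2k}, p, p)` with content
`(c 1, ..., c n)`. -/
def IsRhoSSYT (l k p n : ℕ) (c : ℕ → ℕ) (T : ℕ → ℕ → ℕ) : Prop :=
  IsSSYT (2 * k + 2) l (rhoRow l k p) n c T

/-- A tableau of shape `ϱ = (ℓ^{2k}, p, p)` is proper if `T (q+2) 1 ≥ T q ℓ`
for all `1 ≤ q ≤ 2k`. -/
def IsProper (l k : ℕ) (T : ℕ → ℕ → ℕ) : Prop :=
  ∀ q : ℕ, 1 ≤ q → q ≤ 2 * k → T q l ≤ T (q + 2) 1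

/-- Two fillings agree on every box of the shape with row lengths `r` and `R` rows. -/
def EqOnShape (R : ℕ) (r : ℕ → ℕ) (T T' : ℕ → ℕ → ℕ) : Prop :=
  ∀ a ∈ Finset.Icc 1 R, ∀ b ∈ Finset.Icc 1 (r a), T a b = T' a b

/-- The content `(c 1, ..., c n)` is `ℓ`-maximal if at least `n - 3` of the
amounts `c i` equal `ℓ`. -/
def IsMaximal (l n : ℕ) (c : ℕ → ℕ) : Prop :=
  n - 3 ≤ ((Finset.Icc 1 n).filter (fun i => c i = l)).card

/-- A filling is normalized if it vanishes outside the boxes of the shape. -/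
def Normalized (R : ℕ) (r : ℕ → ℕ) (T : ℕ → ℕ → ℕ) : Prop :=
  ∀ a b : ℕ, ¬ (1 ≤ a ∧ a ≤ R ∧ 1 ≤ b ∧ b ≤ r a) → T a b = 0

namespace Stmt1Aux

/-- partial sums of the content -/
def S (c : ℕ → ℕ) (j : ℕ) : ℕ := ∑ i ∈ Finset.Ioc 0 j, c i

/-- tail partial sums from 2k+2 -/
def W (k : ℕ) (c : ℕ → ℕ) (i : ℕ) : ℕ := ∑ j ∈ Finset.Ioc (2*k+1) i, c j

/-- entry of the last row -/
noncomputable def g (k : ℕ) (c : ℕ → ℕ) (b : ℕ) : ℕ := sInf {i | 2*k+2 ≤ i ∧ b ≤ W k c i}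

/-- the candidate tableau -/
noncomputable def Tab (l k : ℕ) (c : ℕ → ℕ) (a b : ℕ) : ℕ :=
  if a ≤ 2*k then (if b + a*l ≤ l + S c a then a else a+1)
  else if a = 2*k+1 then 2*k+1
  else g k c b

lemma card_filter_prod (R C : ℕ) (P : ℕ × ℕ → Prop) [DecidablePred P] :
    ((Finset.Icc 1 R ×ˢ Finset.Icc 1 C).filter P).card
      = ∑ a ∈ Finset.Icc 1 R, ((Finset.Icc 1 C).filter (fun b => P (a, b))).card := by
  rw [Finset.card_filter, Finset.sum_product]
  refine Finset.sum_congr rfl fun a _ => ?_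
  rw [Finset.card_filter]

lemma card_filter_val_Icc {α : Type*} (X : Finset α) (f : α → ℕ) (lo hi : ℕ) :
    (X.filter (fun q => lo ≤ f q ∧ f q ≤ hi)).card
      = ∑ i ∈ Finset.Icc lo hi, (X.filter (fun q => f q = i)).card := by
  rw [Finset.card_filter]
  have : ∀ i, (X.filter (fun q => f q = i)).card = ∑ q ∈ X, if f q = i then 1 else 0 :=
    fun i => Finset.card_filter _ _
  simp only [this]
  rw [Finset.sum_comm]
  refine Finset.sum_congr rfl fun q _ => ?_
  rw [Finset.sum_ite_eq (Finset.Icc lo hi) (f q) (fun _ => 1)]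
  simp [Finset.mem_Icc]

lemma lower_eq_Icc (N : ℕ) (s : Finset ℕ) (hsub : s ⊆ Finset.Icc 1 N)
    (hlow : ∀ b ∈ s, ∀ b', 1 ≤ b' → b' ≤ b → b' ∈ s) : s = Finset.Icc 1 s.card := by
  rcases s.eq_empty_or_nonempty with h | h
  · simp [h]
  · have hM := s.max'_mem h
    have hs : s = Finset.Icc 1 (s.max' h) := by
      ext x
      simp only [Finset.mem_Icc]
      constructor
      · intro hx
        exact ⟨(Finset.mem_Icc.mp (hsub hx)).1, Finset.le_max' s x hx⟩
      · intro hx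
        exact hlow _ hM x hx.1 hx.2
    have hc : s.card = s.max' h := by
      have h2 := congrArg Finset.card hs
      rw [h2, Nat.card_Icc]
      omega
    rw [hc]
    exact hs

end Stmt1Aux

namespace Stmt1Aux

section Facts

variable {l k p n : ℕ} {c : ℕ → ℕ}

lemma n_ge (hp : 1 ≤ p) (hlam : ∑ i ∈ Finset.Icc (2*k+2) n, c i = p) : 2*k+2 ≤ n := by
  by_contra h
  rw [Finset.Icc_eq_empty (by omega)] at hlam
  simp at hlam
  omega

lemma S_succ (c : ℕ → ℕ) (j : ℕ) : S c (j+1) = S c j + c (j+1) :=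
  Finset.sum_Ioc_succ_top (Nat.zero_le j) _

lemma S_split (c : ℕ → ℕ) {a b : ℕ} (hab : a ≤ b) :
    S c b = S c a + ∑ i ∈ Finset.Ioc a b, c i := by
  rw [S, S, ← Finset.sum_Ioc_consecutive _ (Nat.zero_le a) hab]

lemma tail_le (hbd : ∀ i : ℕ, 1 ≤ i → i ≤ n → c i ≤ l) {a b : ℕ} (hbn : b ≤ n) :
    ∑ i ∈ Finset.Ioc a b, c i ≤ (b - a) * l := by
  have h1 : ∑ i ∈ Finset.Ioc a b, c i ≤ (Finset.Ioc a b).card • l := by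
    refine Finset.sum_le_card_nsmul _ _ _ fun i hi => ?_
    rw [Finset.mem_Ioc] at hi
    exact hbd i (by omega) (by omega)
  simpa [Nat.card_Ioc] using h1

lemma S_le (hbd : ∀ i : ℕ, 1 ≤ i → i ≤ n → c i ≤ l) {a : ℕ} (han : a ≤ n) :
    S c a ≤ a * l := by
  have := tail_le hbd (a := 0) han
  simpa [S] using this

lemma S_top (hp : 1 ≤ p)
    (hsum : ∑ i ∈ Finset.Icc 1 n, c i = 2 * (k * l + p))
    (hlam : ∑ i ∈ Finset.Icc (2 * k + 2) n, c i = p) :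
    S c (2*k+1) = 2*k*l + p := by
  have hn := n_ge hp hlam
  have h1 : S c n = 2 * (k * l + p) := by
    rw [S, ← Finset.Icc_add_one_left_eq_Ioc]
    exact hsum
  have h2 : S c n = S c (2*k+1) + ∑ i ∈ Finset.Ioc (2*k+1) n, c i :=
    S_split c (by omega)
  have h3 : ∑ i ∈ Finset.Ioc (2*k+1) n, c i = p := by
    rw [show Finset.Icc (2*k+2) n = Finset.Ioc (2*k+1) n from Finset.Icc_add_one_left_eq_Ioc (2*k+1) n] at hlam
    exact hlam
  have : 2*k*l = 2*(k*l) := by ring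
  omega

lemma A_bound (hp : 1 ≤ p)
    (hbd : ∀ i : ℕ, 1 ≤ i → i ≤ n → c i ≤ l)
    (hsum : ∑ i ∈ Finset.Icc 1 n, c i = 2 * (k * l + p))
    (hlam : ∑ i ∈ Finset.Icc (2 * k + 2) n, c i = p)
    {a : ℕ} (ha : a ≤ 2*k+1) : a * l + p ≤ S c a + l := by
  have hn := n_ge hp hlam
  have htop := S_top hp hsum hlam
  have h2 : S c (2*k+1) = S c a + ∑ i ∈ Finset.Ioc a (2*k+1), c i := S_split c ha
  have h3 : ∑ i ∈ Finset.Ioc a (2*k+1), c i ≤ (2*k+1-a) * l := tail_le hbd (by omega)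
  have h4 : (2*k+1-a) * l + a * l = (2*k+1) * l := by
    rw [← Nat.add_mul]
    congr 1
    omega
  have h5 : (2*k+1) * l = 2*k*l + l := by ring
  omega

end Facts

end Stmt1Aux

namespace Stmt1Aux

section GFacts

variable {l k p n : ℕ} {c : ℕ → ℕ}

lemma W_mono (k : ℕ) (c : ℕ → ℕ) {i i' : ℕ} (h : i ≤ i') : W k c i ≤ W k c i' :=
  Finset.sum_le_sum_of_subset (Finset.Ioc_subset_Ioc_right h)

lemma W_base (k : ℕ) (c : ℕ → ℕ) : W k c (2*k+1) = 0 := by simp [W]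

lemma W_n (hlam : ∑ i ∈ Finset.Icc (2 * k + 2) n, c i = p) : W k c n = p := by
  rw [show Finset.Icc (2*k+2) n = Finset.Ioc (2*k+1) n from Finset.Icc_add_one_left_eq_Ioc (2*k+1) n] at hlam
  exact hlam

lemma W_succ (k : ℕ) (c : ℕ → ℕ) {i : ℕ} (h : 2*k+1 ≤ i) :
    W k c (i+1) = W k c i + c (i+1) :=
  Finset.sum_Ioc_succ_top h _

lemma W_le_p (hlam : ∑ i ∈ Finset.Icc (2 * k + 2) n, c i = p) {i : ℕ} (hin : i ≤ n) :
    W k c i ≤ p := by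
  rw [← W_n hlam]
  exact W_mono k c hin

lemma g_mem (hn : 2*k+2 ≤ n) (hlam : ∑ i ∈ Finset.Icc (2 * k + 2) n, c i = p)
    {b : ℕ} (hbp : b ≤ p) :
    2*k+2 ≤ g k c b ∧ b ≤ W k c (g k c b) ∧ g k c b ≤ n := by
  have hne : n ∈ {i | 2*k+2 ≤ i ∧ b ≤ W k c i} := ⟨hn, by rw [W_n hlam]; exact hbp⟩
  have h1 := Nat.sInf_mem (⟨n, hne⟩ : {i | 2*k+2 ≤ i ∧ b ≤ W k c i}.Nonempty)
  exact ⟨h1.1, h1.2, Nat.sInf_le hne⟩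

lemma g_le_iff (hn : 2*k+2 ≤ n) (hlam : ∑ i ∈ Finset.Icc (2 * k + 2) n, c i = p)
    {b i : ℕ} (hbp : b ≤ p) (hi : 2*k+2 ≤ i) :
    g k c b ≤ i ↔ b ≤ W k c i := by
  constructor
  · intro h
    exact le_trans (g_mem hn hlam hbp).2.1 (W_mono k c h)
  · intro h
    exact Nat.sInf_le ⟨hi, h⟩

lemma g_mono (hn : 2*k+2 ≤ n) (hlam : ∑ i ∈ Finset.Icc (2 * k + 2) n, c i = p)
    {b b' : ℕ} (hbb : b ≤ b') (hbp : b' ≤ p) : g k c b ≤ g k c b' := by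
  have h1 := g_mem hn hlam hbp
  exact (g_le_iff hn hlam (le_trans hbb hbp) h1.1).mpr (le_trans hbb h1.2.1)

lemma g_count (hn : 2*k+2 ≤ n) (hlam : ∑ i ∈ Finset.Icc (2 * k + 2) n, c i = p)
    {i : ℕ} (hi : 2*k+2 ≤ i) (hin : i ≤ n) :
    ((Finset.Icc 1 p).filter (fun b => g k c b = i)).card = c i := by
  obtain ⟨j, rfl⟩ : ∃ j, i = j + 1 := ⟨i - 1, by omega⟩
  have hW1 : W k c (j+1) = W k c j + c (j+1) := W_succ k c (by omega)
  have hset : (Finset.Icc 1 p).filter (fun b => g k c b = j+1)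
      = Finset.Icc (W k c j + 1) (W k c (j+1)) := by
    ext b
    simp only [Finset.mem_filter, Finset.mem_Icc]
    constructor
    · rintro ⟨⟨hb1, hbp⟩, hgb⟩
      refine ⟨?_, (g_le_iff hn hlam hbp hi).mp (le_of_eq hgb)⟩
      by_contra hle
      push_neg at hle
      rcases Nat.lt_or_ge (2*k+1) j with hj | hj
      · have := (g_le_iff hn hlam hbp (by omega)).mpr (by omega : b ≤ W k c j)
        omega
      · have hj2 : j = 2*k+1 := by omega
        rw [hj2, W_base] at hle
        omega
    · rintro ⟨hb1, hb2⟩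
      have hbp : b ≤ p := le_trans hb2 (W_le_p hlam hin)
      have h1 : 1 ≤ b := by omega
      refine ⟨⟨h1, hbp⟩, ?_⟩
      have hle : g k c b ≤ j + 1 := (g_le_iff hn hlam hbp hi).mpr hb2
      have hge : j + 1 ≤ g k c b := by
        by_contra hlt
        push_neg at hlt
        have h2 := (g_mem hn hlam hbp).2.1
        have h3 : W k c (g k c b) ≤ W k c j := W_mono k c (by omega)
        omega
      omega
  rw [hset, Nat.card_Icc]
  omega

end GFacts

end Stmt1Aux

namespace Stmt1Aux

/-- threshold in row `a` -/
def m (l : ℕ) (c : ℕ → ℕ) (a : ℕ) : ℕ := l + S c a - a * l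

section MFacts

variable {l k p n : ℕ} {c : ℕ → ℕ}

lemma m_zero : m l c 0 = l := by simp [m, S]

lemma m_add (hp : 1 ≤ p)
    (hbd : ∀ i : ℕ, 1 ≤ i → i ≤ n → c i ≤ l)
    (hsum : ∑ i ∈ Finset.Icc 1 n, c i = 2 * (k * l + p))
    (hlam : ∑ i ∈ Finset.Icc (2 * k + 2) n, c i = p)
    {a : ℕ} (ha : a ≤ 2*k+1) : m l c a + a * l = l + S c a := by
  have h1 := A_bound hp hbd hsum hlam ha
  simp only [m]
  omega

lemma m_le_l (hbd : ∀ i : ℕ, 1 ≤ i → i ≤ n → c i ≤ l)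
    {a : ℕ} (han : a ≤ n) : m l c a ≤ l := by
  have h1 := S_le hbd han
  simp only [m]
  omega

lemma m_ge_p (hp : 1 ≤ p)
    (hbd : ∀ i : ℕ, 1 ≤ i → i ≤ n → c i ≤ l)
    (hsum : ∑ i ∈ Finset.Icc 1 n, c i = 2 * (k * l + p))
    (hlam : ∑ i ∈ Finset.Icc (2 * k + 2) n, c i = p)
    {a : ℕ} (ha : a ≤ 2*k+1) : p ≤ m l c a := by
  have h1 := A_bound hp hbd hsum hlam ha
  simp only [m]
  omega

lemma m_rec (hp : 1 ≤ p)
    (hbd : ∀ i : ℕ, 1 ≤ i → i ≤ n → c i ≤ l)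
    (hsum : ∑ i ∈ Finset.Icc 1 n, c i = 2 * (k * l + p))
    (hlam : ∑ i ∈ Finset.Icc (2 * k + 2) n, c i = p)
    {a : ℕ} (ha : a + 1 ≤ 2*k+1) : m l c (a+1) + l = m l c a + c (a+1) := by
  have h1 := m_add hp hbd hsum hlam (by omega : a ≤ 2*k+1)
  have h2 := m_add hp hbd hsum hlam ha
  have h3 : (a+1)*l = a*l + l := by ring
  rw [h3] at h2
  have h4 := S_succ c a
  omega

lemma m_top (hp : 1 ≤ p)
    (hbd : ∀ i : ℕ, 1 ≤ i → i ≤ n → c i ≤ l)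
    (hsum : ∑ i ∈ Finset.Icc 1 n, c i = 2 * (k * l + p))
    (hlam : ∑ i ∈ Finset.Icc (2 * k + 2) n, c i = p) :
    m l c (2*k+1) = p := by
  have h1 := m_add hp hbd hsum hlam (le_refl (2*k+1))
  have h2 := S_top hp hsum hlam
  have h3 : (2*k+1)*l = 2*k*l + l := by ring
  rw [h2, h3] at h1
  omega

/-- The condition defining the first branch of `Tab`, rewritten via `m`. -/
lemma Tab_cond (hp : 1 ≤ p)
    (hbd : ∀ i : ℕ, 1 ≤ i → i ≤ n → c i ≤ l)
    (hsum : ∑ i ∈ Finset.Icc 1 n, c i = 2 * (k * l + p))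
    (hlam : ∑ i ∈ Finset.Icc (2 * k + 2) n, c i = p)
    {a b : ℕ} (ha : a ≤ 2*k+1) : b + a*l ≤ l + S c a ↔ b ≤ m l c a := by
  have h1 := m_add hp hbd hsum hlam ha
  omega

end MFacts

end Stmt1Aux

namespace Stmt1Aux

section Exist

variable {l k p n : ℕ} {c : ℕ → ℕ}

lemma Tab_rowcount (hp : 1 ≤ p) (hpl : p ≤ l)
    (hbd : ∀ i : ℕ, 1 ≤ i → i ≤ n → c i ≤ l)
    (hsum : ∑ i ∈ Finset.Icc 1 n, c i = 2 * (k * l + p))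
    (hlam : ∑ i ∈ Finset.Icc (2 * k + 2) n, c i = p)
    {i : ℕ} (hi1 : 1 ≤ i) (hin : i ≤ n) {a : ℕ} (ha1 : 1 ≤ a) (ha2 : a ≤ 2*k+2) :
    ((Finset.Icc 1 l).filter (fun b => b ≤ rhoRow l k p a ∧ Tab l k c a b = i)).card
      = if a ≤ 2*k then (if i = a then m l c a else if i = a+1 then l - m l c a else 0)
        else if a = 2*k+1 then (if i = 2*k+1 then p else 0)
        else (if 2*k+2 ≤ i then c i else 0) := by
  have hn := n_ge hp hlam
  by_cases h2k : a ≤ 2*k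
  · rw [if_pos h2k]
    have hrr : rhoRow l k p a = l := by rw [rhoRow, if_pos h2k]
    have hM : m l c a ≤ l := m_le_l hbd (by omega)
    have hTab : ∀ b, Tab l k c a b = i ↔
        ((i = a ∧ b ≤ m l c a) ∨ (i = a + 1 ∧ ¬ b ≤ m l c a)) := by
      intro b
      rw [Tab, if_pos h2k]
      by_cases hc : b ≤ m l c a
      · rw [if_pos ((Tab_cond hp hbd hsum hlam (by omega : a ≤ 2*k+1)).mpr hc)]
        constructor <;> intro hh <;> omega
      · rw [if_neg (fun hh => hc ((Tab_cond hp hbd hsum hlam (by omega : a ≤ 2*k+1)).mp hh))]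
        constructor <;> intro hh <;> omega
    by_cases hia : i = a
    · rw [if_pos hia]
      have : (Finset.Icc 1 l).filter (fun b => b ≤ rhoRow l k p a ∧ Tab l k c a b = i)
          = Finset.Icc 1 (m l c a) := by
        ext b
        simp only [Finset.mem_filter, Finset.mem_Icc, hrr, hTab b]
        omega
      rw [this, Nat.card_Icc]
      omega
    · rw [if_neg hia]
      by_cases hia1 : i = a + 1
      · rw [if_pos hia1]
        have : (Finset.Icc 1 l).filter (fun b => b ≤ rhoRow l k p a ∧ Tab l k c a b = i)
            = Finset.Icc (m l c a + 1) l := by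
          ext b
          simp only [Finset.mem_filter, Finset.mem_Icc, hrr, hTab b]
          omega
        rw [this, Nat.card_Icc]
        omega
      · rw [if_neg hia1]
        have : (Finset.Icc 1 l).filter (fun b => b ≤ rhoRow l k p a ∧ Tab l k c a b = i)
            = ∅ := by
          ext b
          simp only [Finset.mem_filter, Finset.mem_Icc, hrr, hTab b, Finset.notMem_empty,
            iff_false]
          intro hmem
          omega
        rw [this]
        simp
  · rw [if_neg h2k]
    have hrr : rhoRow l k p a = p := by rw [rhoRow, if_neg h2k]
    by_cases ha21 : a = 2*k+1
    · rw [if_pos ha21]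
      have hTab : ∀ b, Tab l k c a b = 2*k+1 := by
        intro b
        rw [Tab, if_neg h2k, if_pos ha21]
      by_cases hi21 : i = 2*k+1
      · rw [if_pos hi21]
        have : (Finset.Icc 1 l).filter (fun b => b ≤ rhoRow l k p a ∧ Tab l k c a b = i)
            = Finset.Icc 1 p := by
          ext b
          simp only [Finset.mem_filter, Finset.mem_Icc, hrr, hTab b]
          omega
        rw [this, Nat.card_Icc]
        omega
      · rw [if_neg hi21]
        have : (Finset.Icc 1 l).filter (fun b => b ≤ rhoRow l k p a ∧ Tab l k c a b = i)
            = ∅ := by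
          ext b
          simp only [Finset.mem_filter, Finset.mem_Icc, hrr, hTab b, Finset.notMem_empty,
            iff_false]
          intro hmem
          omega
        rw [this]
        simp
    · rw [if_neg ha21]
      have ha22 : a = 2*k+2 := by omega
      have hTab : ∀ b, Tab l k c a b = g k c b := by
        intro b
        rw [Tab, if_neg h2k, if_neg ha21]
      have hconv : (Finset.Icc 1 l).filter (fun b => b ≤ rhoRow l k p a ∧ Tab l k c a b = i)
          = (Finset.Icc 1 p).filter (fun b => g k c b = i) := by
        ext b
        simp only [Finset.mem_filter, Finset.mem_Icc, hrr, hTab b]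
        constructor
        · rintro ⟨⟨h1, _⟩, h2, h3⟩
          exact ⟨⟨h1, h2⟩, h3⟩
        · rintro ⟨⟨h1, h2⟩, h3⟩
          exact ⟨⟨h1, by omega⟩, h2, h3⟩
      rw [hconv]
      by_cases hi22 : 2*k+2 ≤ i
      · rw [if_pos hi22]
        exact g_count hn hlam hi22 hin
      · rw [if_neg hi22]
        have : (Finset.Icc 1 p).filter (fun b => g k c b = i) = ∅ := by
          ext b
          simp only [Finset.mem_filter, Finset.mem_Icc, Finset.notMem_empty,
            iff_false, not_and]
          rintro ⟨h1, h2⟩ h3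
          have := (g_mem hn hlam h2).1
          omega
        rw [this]
        simp
end Exist

end Stmt1Aux

namespace Stmt1Aux

section TabIs

variable {l k p n : ℕ} {c : ℕ → ℕ}

theorem Tab_is (hl : 1 ≤ l) (hp : 1 ≤ p) (hpl : p ≤ l)
    (hbd : ∀ i : ℕ, 1 ≤ i → i ≤ n → c i ≤ l)
    (hsum : ∑ i ∈ Finset.Icc 1 n, c i = 2 * (k * l + p))
    (hlam : ∑ i ∈ Finset.Icc (2 * k + 2) n, c i = p) :
    IsRhoSSYT l k p n c (Tab l k c) := by
  have hn := n_ge hp hlam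
  have hrect : ∀ a b, a ≤ 2*k →
      Tab l k c a b = if b + a*l ≤ l + S c a then a else a + 1 := by
    intro a b h
    rw [Tab, if_pos h]
  have hmid : ∀ b, Tab l k c (2*k+1) b = 2*k+1 := by
    intro b
    rw [Tab, if_neg (by omega), if_pos rfl]
  have hlast : ∀ b, Tab l k c (2*k+2) b = g k c b := by
    intro b
    rw [Tab, if_neg (by omega), if_neg (by omega)]
  have hrl : ∀ a, a ≤ 2*k → rhoRow l k p a = l := fun a h => by rw [rhoRow, if_pos h]
  have hrp : ∀ a, ¬ a ≤ 2*k → rhoRow l k p a = p := fun a h => by rw [rhoRow, if_neg h]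
  refine ⟨?_, ?_, ?_, ?_⟩
  · -- bounds
    intro a ha b hb
    rw [Finset.mem_Icc] at ha hb
    by_cases h2k : a ≤ 2*k
    · rw [hrect a b h2k]
      split_ifs <;> omega
    · by_cases ha21 : a = 2*k+1
      · rw [ha21, hmid]
        omega
      · have ha22 : a = 2*k+2 := by omega
        rw [hrp a h2k] at hb
        rw [ha22, hlast]
        have hg := g_mem hn hlam hb.2
        omega
  · -- rows weakly increase
    intro a ha b b' hb1 hbb hb'
    rw [Finset.mem_Icc] at ha
    by_cases h2k : a ≤ 2*k
    · rw [hrect a b h2k, hrect a b' h2k]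
      split_ifs <;> omega
    · by_cases ha21 : a = 2*k+1
      · rw [ha21, hmid, hmid]
      · have ha22 : a = 2*k+2 := by omega
        rw [hrp a h2k] at hb'
        rw [ha22, hlast, hlast]
        exact g_mono hn hlam hbb hb'
  · -- columns strictly increase
    intro a ha1 ha2 b hb1 hbra hbra1
    by_cases h1 : a + 1 ≤ 2*k
    · rw [hrect a b (by omega), hrect (a+1) b h1]
      have hS := S_succ c a
      have hc := hbd (a+1) (by omega) (by omega)
      have hml : (a+1)*l = a*l + l := by ring
      split_ifs with h2 h3 <;> omega
    · by_cases h2 : a ≤ 2*k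
      · -- a = 2k, row below is 2k+1
        have ha2k : a = 2*k := by omega
        rw [hrp (a+1) (by omega)] at hbra1
        rw [show a + 1 = 2*k+1 by omega, hmid, hrect a b h2]
        have hcond : b + a*l ≤ l + S c a := by
          rw [Tab_cond hp hbd hsum hlam (by omega : a ≤ 2*k+1)]
          exact le_trans hbra1 (m_ge_p hp hbd hsum hlam (by omega))
        rw [if_pos hcond]
        omega
      · -- a = 2k+1
        have ha21 : a = 2*k+1 := by omega
        rw [hrp (a+1) (by omega)] at hbra1
        rw [ha21, hmid, show 2*k+1+1 = 2*k+2 by omega, hlast]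
        have hg := g_mem hn hlam hbra1
        omega
  · -- counts
    intro i hi1 hin
    have hmain : ((Finset.Icc 1 (2*k+2) ×ˢ Finset.Icc 1 l).filter
        (fun q => q.2 ≤ rhoRow l k p q.1 ∧ Tab l k c q.1 q.2 = i)).card
        = ∑ a ∈ Finset.Icc 1 (2*k+2),
            (if a ≤ 2*k then (if i = a then m l c a else if i = a+1 then l - m l c a else 0)
             else if a = 2*k+1 then (if i = 2*k+1 then p else 0)
             else (if 2*k+2 ≤ i then c i else 0)) := by
      rw [card_filter_prod]
      refine Finset.sum_congr rfl fun a ha => ?_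
      rw [Finset.mem_Icc] at ha
      exact Tab_rowcount hp hpl hbd hsum hlam hi1 hin ha.1 ha.2
    rw [hmain]
    by_cases hA : i ≤ 2*k
    · by_cases hB : i = 1
      · -- i = 1 ≤ 2k, so k ≥ 1
        have hsub : ({1} : Finset ℕ) ⊆ Finset.Icc 1 (2*k+2) := by
          intro x hx
          rw [Finset.mem_singleton] at hx
          rw [Finset.mem_Icc]
          omega
        have hzero : ∀ x ∈ Finset.Icc 1 (2*k+2), x ∉ ({1} : Finset ℕ) →
            (if x ≤ 2*k then (if i = x then m l c x else if i = x+1 then l - m l c x else 0)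
             else if x = 2*k+1 then (if i = 2*k+1 then p else 0)
             else (if 2*k+2 ≤ i then c i else 0)) = 0 := by
          intro x hx hx1
          rw [Finset.mem_Icc] at hx
          rw [Finset.mem_singleton] at hx1
          split_ifs <;> omega
        rw [← Finset.sum_subset hsub hzero, Finset.sum_singleton]
        have h1 := m_rec hp hbd hsum hlam (by omega : 0 + 1 ≤ 2*k+1)
        have h2 : m l c 0 = l := m_zero
        rw [if_pos (by omega : (1:ℕ) ≤ 2*k), if_pos hB, hB]
        simp only [zero_add] at h1
        omega
      · -- 2 ≤ i ≤ 2k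
        obtain ⟨j, rfl⟩ : ∃ j, i = j + 1 := ⟨i - 1, by omega⟩
        have hj1 : 1 ≤ j := by omega
        have hsub : ({j, j+1} : Finset ℕ) ⊆ Finset.Icc 1 (2*k+2) := by
          intro x hx
          rw [Finset.mem_insert, Finset.mem_singleton] at hx
          rw [Finset.mem_Icc]
          omega
        have hzero : ∀ x ∈ Finset.Icc 1 (2*k+2), x ∉ ({j, j+1} : Finset ℕ) →
            (if x ≤ 2*k then (if j+1 = x then m l c x else if j+1 = x+1 then l - m l c x else 0)
             else if x = 2*k+1 then (if j+1 = 2*k+1 then p else 0)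
             else (if 2*k+2 ≤ j+1 then c (j+1) else 0)) = 0 := by
          intro x hx hx1
          rw [Finset.mem_Icc] at hx
          rw [Finset.mem_insert, Finset.mem_singleton] at hx1
          split_ifs <;> omega
        rw [← Finset.sum_subset hsub hzero, Finset.sum_pair (by omega : j ≠ j+1)]
        have h1 := m_rec hp hbd hsum hlam (by omega : j + 1 ≤ 2*k+1)
        have h2 := m_le_l (c := c) hbd (by omega : j ≤ n)
        rw [if_pos (by omega : j ≤ 2*k), if_neg (by omega : ¬ j+1 = j),
          if_pos rfl, if_pos (by omega : j+1 ≤ 2*k), if_pos rfl]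
        omega
    · by_cases hC : i = 2*k+1
      · by_cases hk : k = 0
        · -- k = 0, i = 1
          subst hk
          have hi : i = 1 := by omega
          subst hi
          have hsub : ({1} : Finset ℕ) ⊆ Finset.Icc 1 (2*0+2) := by
            intro x hx
            rw [Finset.mem_singleton] at hx
            rw [Finset.mem_Icc]
            omega
          have hzero : ∀ x ∈ Finset.Icc 1 (2*0+2), x ∉ ({1} : Finset ℕ) →
              (if x ≤ 2*0 then (if 1 = x then m l c x else if 1 = x+1 then l - m l c x else 0)
               else if x = 2*0+1 then (if 1 = 2*0+1 then p else 0)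
               else (if 2*0+2 ≤ 1 then c 1 else 0)) = 0 := by
            intro x hx hx1
            rw [Finset.mem_Icc] at hx
            rw [Finset.mem_singleton] at hx1
            split_ifs <;> omega
          rw [← Finset.sum_subset hsub hzero, Finset.sum_singleton]
          rw [if_neg (by omega : ¬ (1:ℕ) ≤ 2*0), if_pos (by omega : (1:ℕ) = 2*0+1),
            if_pos (by omega : (1:ℕ) = 2*0+1)]
          have h1 := m_rec (k := 0) hp hbd hsum hlam (by omega : 0 + 1 ≤ 2*0+1)
          have h2 : m l c 0 = l := m_zero
          have h3 := m_top hp hbd hsum hlam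
          simp only [zero_add] at h1
          simp only [Nat.mul_zero, Nat.zero_add] at h3
          omega
        · -- k ≥ 1, i = 2k+1
          have hsub : ({2*k, 2*k+1} : Finset ℕ) ⊆ Finset.Icc 1 (2*k+2) := by
            intro x hx
            rw [Finset.mem_insert, Finset.mem_singleton] at hx
            rw [Finset.mem_Icc]
            omega
          have hzero : ∀ x ∈ Finset.Icc 1 (2*k+2), x ∉ ({2*k, 2*k+1} : Finset ℕ) →
              (if x ≤ 2*k then (if i = x then m l c x else if i = x+1 then l - m l c x else 0)
               else if x = 2*k+1 then (if i = 2*k+1 then p else 0)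
               else (if 2*k+2 ≤ i then c i else 0)) = 0 := by
            intro x hx hx1
            rw [Finset.mem_Icc] at hx
            rw [Finset.mem_insert, Finset.mem_singleton] at hx1
            split_ifs <;> omega
          rw [← Finset.sum_subset hsub hzero, Finset.sum_pair (by omega : 2*k ≠ 2*k+1)]
          have h1 := m_rec hp hbd hsum hlam (by omega : 2*k + 1 ≤ 2*k+1)
          have h2 := m_le_l (c := c) hbd (by omega : 2*k ≤ n)
          have h3 := m_top hp hbd hsum hlam
          rw [if_pos (le_refl (2*k)), if_neg (by omega : ¬ i = 2*k), if_pos (by omega : i = 2*k+1),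
            if_neg (by omega : ¬ 2*k+1 ≤ 2*k), if_pos rfl, if_pos hC]
          rw [hC]
          omega
      · -- i ≥ 2k+2
        have hD : 2*k+2 ≤ i := by omega
        have hsub : ({2*k+2} : Finset ℕ) ⊆ Finset.Icc 1 (2*k+2) := by
          intro x hx
          rw [Finset.mem_singleton] at hx
          rw [Finset.mem_Icc]
          omega
        have hzero : ∀ x ∈ Finset.Icc 1 (2*k+2), x ∉ ({2*k+2} : Finset ℕ) →
            (if x ≤ 2*k then (if i = x then m l c x else if i = x+1 then l - m l c x else 0)
             else if x = 2*k+1 then (if i = 2*k+1 then p else 0)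
             else (if 2*k+2 ≤ i then c i else 0)) = 0 := by
          intro x hx hx1
          rw [Finset.mem_Icc] at hx
          rw [Finset.mem_singleton] at hx1
          split_ifs <;> omega
        rw [← Finset.sum_subset hsub hzero, Finset.sum_singleton]
        rw [if_neg (by omega : ¬ 2*k+2 ≤ 2*k), if_neg (by omega : ¬ 2*k+2 = 2*k+1),
          if_pos hD]

end TabIs

end Stmt1Aux

namespace Stmt1Aux

/-- the number of entries equal to `a` in row `a` of `T'`, with `Yf 0 = l` -/
def Yf (l : ℕ) (T' : ℕ → ℕ → ℕ) (a : ℕ) : ℕ :=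
  if a = 0 then l else ((Finset.Icc 1 l).filter (fun b => T' a b = a)).card

section Uniq

variable {l k p n : ℕ} {c : ℕ → ℕ}

theorem Tab_proper (hl : 1 ≤ l) (hp : 1 ≤ p) (hpl : p ≤ l)
    (hbd : ∀ i : ℕ, 1 ≤ i → i ≤ n → c i ≤ l)
    (hsum : ∑ i ∈ Finset.Icc 1 n, c i = 2 * (k * l + p))
    (hlam : ∑ i ∈ Finset.Icc (2 * k + 2) n, c i = p) :
    IsProper l k (Tab l k c) := by
  have hn := n_ge hp hlam
  intro q hq1 hq2
  have hTl : Tab l k c q l ≤ q + 1 := by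
    rw [Tab, if_pos hq2]
    split_ifs <;> omega
  by_cases h1 : q + 2 ≤ 2*k
  · have e2 : q + 2 ≤ Tab l k c (q+2) 1 := by
      rw [Tab, if_pos h1]
      split_ifs <;> omega
    omega
  · by_cases h2 : q + 2 = 2*k+1
    · have e2 : Tab l k c (q+2) 1 = 2*k+1 := by
        rw [Tab, if_neg (by omega), if_pos h2]
      omega
    · have h3 : q + 2 = 2*k+2 := by omega
      have e2 : Tab l k c (q+2) 1 = g k c 1 := by
        rw [Tab, if_neg (by omega), if_neg (by omega)]
      have hg := g_mem hn hlam (hp : 1 ≤ p)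
      omega

theorem Tab_unique (hl : 1 ≤ l) (hp : 1 ≤ p) (hpl : p ≤ l)
    (hbd : ∀ i : ℕ, 1 ≤ i → i ≤ n → c i ≤ l)
    (hsum : ∑ i ∈ Finset.Icc 1 n, c i = 2 * (k * l + p))
    (hlam : ∑ i ∈ Finset.Icc (2 * k + 2) n, c i = p)
    (T' : ℕ → ℕ → ℕ) (hT' : IsRhoSSYT l k p n c T') :
    EqOnShape (2 * k + 2) (rhoRow l k p) T' (Tab l k c) := by
  obtain ⟨hb', hr', hc', hn'⟩ := hT'
  have hn := n_ge hp hlam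
  have hrl : ∀ a, a ≤ 2*k → rhoRow l k p a = l := fun a h => by rw [rhoRow, if_pos h]
  have hrp : ∀ a, ¬ a ≤ 2*k → rhoRow l k p a = p := fun a h => by rw [rhoRow, if_neg h]
  have hrle : ∀ a, rhoRow l k p a ≤ l := by
    intro a
    rw [rhoRow]
    split_ifs <;> omega
  have hrmono : ∀ a, rhoRow l k p (a+1) ≤ rhoRow l k p a := by
    intro a
    rw [rhoRow, rhoRow]
    split_ifs <;> omega
  -- Step 1 : entries are at least the row index
  have hge : ∀ a, 1 ≤ a → a ≤ 2*k+2 → ∀ b, 1 ≤ b → b ≤ rhoRow l k p a → a ≤ T' a b := by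
    intro a
    induction a with
    | zero => omega
    | succ a ih =>
      intro ha1 ha2 b hb1 hb2
      by_cases h0 : a = 0
      · subst h0
        exact (hb' 1 (by rw [Finset.mem_Icc]; omega) b
          (by rw [Finset.mem_Icc]; exact ⟨hb1, hb2⟩)).1
      · have h1 : a ≤ T' a b := ih (by omega) (by omega) b hb1 (le_trans hb2 (hrmono a))
        have h2 := hc' a (by omega) (by omega) b hb1 (le_trans hb2 (hrmono a)) hb2
        omega
  -- Step 2 : entries of value ≥ 2k+2 fill exactly the last row
  have hXval : ∀ i, 1 ≤ i → i ≤ n →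
      (((Finset.Icc 1 (2*k+2) ×ˢ Finset.Icc 1 l).filter
        (fun q => q.2 ≤ rhoRow l k p q.1)).filter (fun q => T' q.1 q.2 = i)).card = c i := by
    intro i h1 h2
    rw [Finset.filter_filter]
    exact hn' i h1 h2
  have hAcard : (((Finset.Icc 1 (2*k+2) ×ˢ Finset.Icc 1 l).filter
      (fun q => q.2 ≤ rhoRow l k p q.1)).filter (fun q => 2*k+2 ≤ T' q.1 q.2)).card = p := by
    have h1 : ((Finset.Icc 1 (2*k+2) ×ˢ Finset.Icc 1 l).filter
          (fun q => q.2 ≤ rhoRow l k p q.1)).filter (fun q => 2*k+2 ≤ T' q.1 q.2)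
        = ((Finset.Icc 1 (2*k+2) ×ˢ Finset.Icc 1 l).filter
          (fun q => q.2 ≤ rhoRow l k p q.1)).filter
            (fun q => 2*k+2 ≤ T' q.1 q.2 ∧ T' q.1 q.2 ≤ n) := by
      apply Finset.filter_congr
      intro q hq
      rw [Finset.mem_filter, Finset.mem_product] at hq
      obtain ⟨⟨hq1, hq2⟩, hq3⟩ := hq
      rw [Finset.mem_Icc] at hq2
      have := (hb' q.1 hq1 q.2 (by rw [Finset.mem_Icc]; exact ⟨hq2.1, hq3⟩)).2
      simp only [this, and_true]
    rw [h1, card_filter_val_Icc ((Finset.Icc 1 (2*k+2) ×ˢ Finset.Icc 1 l).filter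
      (fun q => q.2 ≤ rhoRow l k p q.1)) (fun q : ℕ × ℕ => T' q.1 q.2) (2*k+2) n]
    have hs : ∑ i ∈ Finset.Icc (2*k+2) n,
        (((Finset.Icc 1 (2*k+2) ×ˢ Finset.Icc 1 l).filter
          (fun q => q.2 ≤ rhoRow l k p q.1)).filter (fun q => T' q.1 q.2 = i)).card
        = ∑ i ∈ Finset.Icc (2*k+2) n, c i := by
      refine Finset.sum_congr rfl fun i hi => ?_
      rw [Finset.mem_Icc] at hi
      exact hXval i (by omega) hi.2
    rw [hs]
    exact hlam
  have hBcard : (((Finset.Icc 1 (2*k+2) ×ˢ Finset.Icc 1 l).filter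
      (fun q => q.2 ≤ rhoRow l k p q.1)).filter (fun q => q.1 = 2*k+2)).card = p := by
    have h1 : ((Finset.Icc 1 (2*k+2) ×ˢ Finset.Icc 1 l).filter
          (fun q => q.2 ≤ rhoRow l k p q.1)).filter (fun q => q.1 = 2*k+2)
        = {2*k+2} ×ˢ Finset.Icc 1 p := by
      ext q
      simp only [Finset.mem_filter, Finset.mem_product, Finset.mem_Icc, Finset.mem_singleton]
      constructor
      · rintro ⟨⟨⟨hq1, hq2⟩, hq3⟩, hq4⟩
        refine ⟨hq4, hq2.1, ?_⟩
        rw [hq4, hrp (2*k+2) (by omega)] at hq3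
        exact hq3
      · rintro ⟨hq1, hq2, hq3⟩
        refine ⟨⟨⟨?_, ?_⟩, ?_⟩, hq1⟩
        · omega
        · constructor <;> omega
        · rw [hq1, hrp (2*k+2) (by omega)]
          exact hq3
    rw [h1, Finset.card_product, Finset.card_singleton, Nat.card_Icc]
    omega
  have hAB : ((Finset.Icc 1 (2*k+2) ×ˢ Finset.Icc 1 l).filter
        (fun q => q.2 ≤ rhoRow l k p q.1)).filter (fun q => 2*k+2 ≤ T' q.1 q.2)
      = ((Finset.Icc 1 (2*k+2) ×ˢ Finset.Icc 1 l).filter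
        (fun q => q.2 ≤ rhoRow l k p q.1)).filter (fun q => q.1 = 2*k+2) := by
    refine (Finset.eq_of_subset_of_card_le ?_ (by rw [hAcard, hBcard])).symm
    intro q hq
    rw [Finset.mem_filter] at hq ⊢
    obtain ⟨hq1, hq2⟩ := hq
    refine ⟨hq1, ?_⟩
    rw [Finset.mem_filter, Finset.mem_product] at hq1
    obtain ⟨⟨hq3, hq4⟩, hq5⟩ := hq1
    rw [Finset.mem_Icc] at hq3 hq4
    have := hge q.1 hq3.1 hq3.2 q.2 hq4.1 hq5
    omega
  have hub : ∀ a, 1 ≤ a → a ≤ 2*k+1 → ∀ b, 1 ≤ b → b ≤ rhoRow l k p a → T' a b ≤ 2*k+1 := by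
    intro a ha1 ha2 b hb1 hb2
    by_contra hcon
    push_neg at hcon
    have hq : (a, b) ∈ ((Finset.Icc 1 (2*k+2) ×ˢ Finset.Icc 1 l).filter
        (fun q => q.2 ≤ rhoRow l k p q.1)).filter (fun q => 2*k+2 ≤ T' q.1 q.2) := by
      rw [Finset.mem_filter, Finset.mem_filter, Finset.mem_product, Finset.mem_Icc,
        Finset.mem_Icc]
      exact ⟨⟨⟨⟨ha1, by omega⟩, hb1, le_trans hb2 (hrle a)⟩, hb2⟩, hcon⟩
    rw [hAB, Finset.mem_filter] at hq
    have := hq.2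
    simp only at this
    omega
  have hmid' : ∀ b, 1 ≤ b → b ≤ p → T' (2*k+1) b = 2*k+1 := by
    intro b hb1 hb2
    have hbr : b ≤ rhoRow l k p (2*k+1) := by
      rw [hrp (2*k+1) (by omega)]
      exact hb2
    have h1 := hge (2*k+1) (by omega) (by omega) b hb1 hbr
    have h2 := hub (2*k+1) (by omega) (by omega) b hb1 hbr
    omega
  have hub2 : ∀ a, 1 ≤ a → a ≤ 2*k → ∀ b, 1 ≤ b → b ≤ l → T' a b ≤ a + 1 := by
    have key : ∀ d a, a + d = 2*k → 1 ≤ a → ∀ b, 1 ≤ b → b ≤ l → T' a b ≤ a + 1 := by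
      intro d
      induction d with
      | zero =>
        intro a hd ha1 b hb1 hb2
        have := hub a ha1 (by omega) b hb1 (by rw [hrl a (by omega)]; exact hb2)
        omega
      | succ d ih =>
        intro a hd ha1 b hb1 hb2
        have h1 := ih (a+1) (by omega) (by omega) b hb1 hb2
        have h2 := hc' a ha1 (by omega) b hb1 (by rw [hrl a (by omega)]; exact hb2)
          (by rw [hrl (a+1) (by omega)]; exact hb2)
        omega
    intro a ha1 ha2
    exact key (2*k - a) a (by omega) ha1
  -- description of all entries
  have hrowdesc : ∀ x, 1 ≤ x → x ≤ 2*k+2 → ∀ b, 1 ≤ b → b ≤ rhoRow l k p x →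
      (x ≤ 2*k ∧ x ≤ T' x b ∧ T' x b ≤ x+1) ∨ (x = 2*k+1 ∧ T' x b = 2*k+1)
        ∨ (x = 2*k+2 ∧ 2*k+2 ≤ T' x b ∧ T' x b ≤ n) := by
    intro x hx1 hx2 b hb1 hb2
    by_cases h2k : x ≤ 2*k
    · left
      refine ⟨h2k, hge x hx1 (by omega) b hb1 hb2, ?_⟩
      rw [hrl x h2k] at hb2
      exact hub2 x hx1 h2k b hb1 hb2
    · by_cases h21 : x = 2*k+1
      · right; left
        refine ⟨h21, ?_⟩
        subst h21
        rw [hrp _ (by omega)] at hb2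
        exact hmid' b hb1 hb2
      · right; right
        have h22 : x = 2*k+2 := by omega
        refine ⟨h22, by rw [← h22]; exact hge x hx1 (by omega) b hb1 hb2, ?_⟩
        exact (hb' x (by rw [Finset.mem_Icc]; omega) b (by rw [Finset.mem_Icc]; exact ⟨hb1, hb2⟩)).2
  -- threshold description of rows 1..2k
  have hYl : ∀ a, Yf l T' a ≤ l := by
    intro a
    rw [Yf]
    split_ifs
    · exact le_refl l
    · calc ((Finset.Icc 1 l).filter (fun b => T' a b = a)).card
          ≤ (Finset.Icc 1 l).card := Finset.card_filter_le _ _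
        _ = l := by rw [Nat.card_Icc]; omega
  have hYthr : ∀ a, 1 ≤ a → a ≤ 2*k → ∀ b, 1 ≤ b → b ≤ l → (T' a b = a ↔ b ≤ Yf l T' a) := by
    intro a ha1 ha2
    have hlow : ∀ b ∈ (Finset.Icc 1 l).filter (fun b => T' a b = a), ∀ b', 1 ≤ b' → b' ≤ b →
        b' ∈ (Finset.Icc 1 l).filter (fun b => T' a b = a) := by
      intro b hb b' h1 h2
      rw [Finset.mem_filter, Finset.mem_Icc] at hb
      rw [Finset.mem_filter, Finset.mem_Icc]
      refine ⟨⟨h1, le_trans h2 hb.1.2⟩, ?_⟩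
      have hle : T' a b' ≤ T' a b := hr' a (by rw [Finset.mem_Icc]; omega) b' b h1 h2
        (by rw [hrl a ha2]; exact hb.1.2)
      have hgeb : a ≤ T' a b' := hge a ha1 (by omega) b' h1
        (by rw [hrl a ha2]; omega)
      have hv := hb.2
      omega
    have hlower := lower_eq_Icc l ((Finset.Icc 1 l).filter (fun b => T' a b = a))
      (Finset.filter_subset _ _) hlow
    intro b hb1 hb2
    have hYeq : Yf l T' a = ((Finset.Icc 1 l).filter (fun b => T' a b = a)).card := by
      rw [Yf, if_neg (by omega)]
    constructor
    · intro he
      have hmem : b ∈ (Finset.Icc 1 l).filter (fun b => T' a b = a) := by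
        rw [Finset.mem_filter, Finset.mem_Icc]
        exact ⟨⟨hb1, hb2⟩, he⟩
      rw [hlower, Finset.mem_Icc] at hmem
      omega
    · intro hle
      have hmem : b ∈ Finset.Icc 1 ((Finset.Icc 1 l).filter (fun b => T' a b = a)).card := by
        rw [Finset.mem_Icc]
        rw [hYeq] at hle
        exact ⟨hb1, hle⟩
      rw [← hlower, Finset.mem_filter] at hmem
      exact hmem.2
  have hY0 : Yf l T' 0 = l := by rw [Yf, if_pos rfl]
  -- the counting recurrence for Yf
  have hYrec : ∀ a, 1 ≤ a → a ≤ 2*k → c a + Yf l T' (a-1) = l + Yf l T' a := by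
    intro a ha1 ha2
    have hmain : c a = ∑ x ∈ Finset.Icc 1 (2*k+2),
        ((Finset.Icc 1 l).filter (fun b => b ≤ rhoRow l k p x ∧ T' x b = a)).card := by
      rw [← hn' a (by omega) (by omega), card_filter_prod]
    have hterma : ((Finset.Icc 1 l).filter (fun b => b ≤ rhoRow l k p a ∧ T' a b = a)).card
        = Yf l T' a := by
      have he : (Finset.Icc 1 l).filter (fun b => b ≤ rhoRow l k p a ∧ T' a b = a)
          = (Finset.Icc 1 l).filter (fun b => T' a b = a) := by
        ext b
        simp only [Finset.mem_filter, Finset.mem_Icc, hrl a ha2]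
        constructor
        · rintro ⟨h1, _, h3⟩
          exact ⟨h1, h3⟩
        · rintro ⟨h1, h3⟩
          exact ⟨h1, h1.2, h3⟩
      rw [he, Yf, if_neg (by omega)]
    by_cases hone : a = 1
    · subst hone
      have hsub : ({1} : Finset ℕ) ⊆ Finset.Icc 1 (2*k+2) := by
        intro x hx
        rw [Finset.mem_singleton] at hx
        rw [Finset.mem_Icc]
        omega
      have hzero : ∀ x ∈ Finset.Icc 1 (2*k+2), x ∉ ({1} : Finset ℕ) →
          ((Finset.Icc 1 l).filter (fun b => b ≤ rhoRow l k p x ∧ T' x b = 1)).card = 0 := by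
        intro x hx hx1
        rw [Finset.mem_Icc] at hx
        rw [Finset.mem_singleton] at hx1
        rw [Finset.card_eq_zero, Finset.filter_eq_empty_iff]
        intro b hb
        rw [Finset.mem_Icc] at hb
        rintro ⟨hbr, hval⟩
        have hd := hrowdesc x hx.1 hx.2 b hb.1 hbr
        omega
      rw [hmain, ← Finset.sum_subset hsub hzero, Finset.sum_singleton, hterma, hY0]
      omega
    · obtain ⟨j, rfl⟩ : ∃ j, a = j + 1 := ⟨a - 1, by omega⟩
      have hj1 : 1 ≤ j := by omega
      have htermj : ((Finset.Icc 1 l).filter (fun b => b ≤ rhoRow l k p j ∧ T' j b = j+1)).card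
          = l - Yf l T' j := by
        have he : (Finset.Icc 1 l).filter (fun b => b ≤ rhoRow l k p j ∧ T' j b = j+1)
            = Finset.Icc (Yf l T' j + 1) l := by
          ext b
          simp only [Finset.mem_filter, Finset.mem_Icc, hrl j (by omega)]
          constructor
          · rintro ⟨⟨h1, h2⟩, _, h4⟩
            refine ⟨?_, h2⟩
            by_contra hcon
            push_neg at hcon
            have := (hYthr j hj1 (by omega) b h1 h2).mpr (by omega)
            omega
          · rintro ⟨h1, h2⟩
            have hb1 : 1 ≤ b := by omega
            refine ⟨⟨hb1, h2⟩, h2, ?_⟩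
            have hd1 := hge j hj1 (by omega) b hb1 (by rw [hrl j (by omega)]; exact h2)
            have hd2 := hub2 j hj1 (by omega) b hb1 h2
            have hd3 : ¬ T' j b = j := by
              intro hcon
              have := (hYthr j hj1 (by omega) b hb1 h2).mp hcon
              omega
            omega
        rw [he, Nat.card_Icc]
        omega
      have hsub : ({j, j+1} : Finset ℕ) ⊆ Finset.Icc 1 (2*k+2) := by
        intro x hx
        rw [Finset.mem_insert, Finset.mem_singleton] at hx
        rw [Finset.mem_Icc]
        omega
      have hzero : ∀ x ∈ Finset.Icc 1 (2*k+2), x ∉ ({j, j+1} : Finset ℕ) →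
          ((Finset.Icc 1 l).filter (fun b => b ≤ rhoRow l k p x ∧ T' x b = j+1)).card = 0 := by
        intro x hx hx1
        rw [Finset.mem_Icc] at hx
        rw [Finset.mem_insert, Finset.mem_singleton] at hx1
        push_neg at hx1
        rw [Finset.card_eq_zero, Finset.filter_eq_empty_iff]
        intro b hb
        rw [Finset.mem_Icc] at hb
        rintro ⟨hbr, hval⟩
        have hd := hrowdesc x hx.1 hx.2 b hb.1 hbr
        omega
      have hYlj := hYl j
      rw [hmain, ← Finset.sum_subset hsub hzero, Finset.sum_pair (by omega : j ≠ j+1),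
        htermj, hterma]
      simp only [Nat.add_sub_cancel]
      omega
  have hYval : ∀ a, a ≤ 2*k → Yf l T' a + a * l = S c a + l := by
    intro a
    induction a with
    | zero =>
      intro _
      have h0 : S c 0 = 0 := by simp [S]
      rw [hY0]
      omega
    | succ a ih =>
      intro h
      have hr := hYrec (a+1) (by omega) h
      simp only [Nat.add_sub_cancel] at hr
      have hih := ih (by omega)
      have hS := S_succ c a
      have hml : (a+1)*l = a*l + l := by ring
      omega
  -- the last row of T' as counted sets
  have hlastcnt : ∀ i, 2*k+2 ≤ i → i ≤ n →
      ((Finset.Icc 1 p).filter (fun b => T' (2*k+2) b = i)).card = c i := by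
    intro i hi1 hi2
    have hmain : c i = ∑ x ∈ Finset.Icc 1 (2*k+2),
        ((Finset.Icc 1 l).filter (fun b => b ≤ rhoRow l k p x ∧ T' x b = i)).card := by
      rw [← hn' i (by omega) hi2, card_filter_prod]
    have hsub : ({2*k+2} : Finset ℕ) ⊆ Finset.Icc 1 (2*k+2) := by
      intro x hx
      rw [Finset.mem_singleton] at hx
      rw [Finset.mem_Icc]
      omega
    have hzero : ∀ x ∈ Finset.Icc 1 (2*k+2), x ∉ ({2*k+2} : Finset ℕ) →
        ((Finset.Icc 1 l).filter (fun b => b ≤ rhoRow l k p x ∧ T' x b = i)).card = 0 := by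
      intro x hx hx1
      rw [Finset.mem_Icc] at hx
      rw [Finset.mem_singleton] at hx1
      rw [Finset.card_eq_zero, Finset.filter_eq_empty_iff]
      intro b hb
      rw [Finset.mem_Icc] at hb
      rintro ⟨hbr, hval⟩
      have hd := hrowdesc x hx.1 hx.2 b hb.1 hbr
      omega
    have hterm : ((Finset.Icc 1 l).filter
        (fun b => b ≤ rhoRow l k p (2*k+2) ∧ T' (2*k+2) b = i)).card
        = ((Finset.Icc 1 p).filter (fun b => T' (2*k+2) b = i)).card := by
      congr 1
      ext b
      simp only [Finset.mem_filter, Finset.mem_Icc, hrp (2*k+2) (by omega)]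
      constructor
      · rintro ⟨⟨h1, _⟩, h3, h4⟩
        exact ⟨⟨h1, h3⟩, h4⟩
      · rintro ⟨⟨h1, h3⟩, h4⟩
        exact ⟨⟨h1, by omega⟩, h3, h4⟩
    rw [hmain, ← Finset.sum_subset hsub hzero, Finset.sum_singleton, hterm]
  -- characterization of the last row entries of T'
  have hZ : ∀ i, 2*k+2 ≤ i → i ≤ n → ∀ b, 1 ≤ b → b ≤ p →
      (T' (2*k+2) b ≤ i ↔ b ≤ W k c i) := by
    intro i hi1 hi2
    have hfe : (Finset.Icc 1 p).filter (fun b => T' (2*k+2) b ≤ i)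
        = (Finset.Icc 1 p).filter (fun b => 2*k+2 ≤ T' (2*k+2) b ∧ T' (2*k+2) b ≤ i) := by
      apply Finset.filter_congr
      intro b hb
      rw [Finset.mem_Icc] at hb
      have := hge (2*k+2) (by omega) (by omega) b hb.1
        (by rw [hrp _ (by omega)]; exact hb.2)
      exact ⟨fun h => ⟨this, h⟩, fun h => h.2⟩
    have hIccIoc : Finset.Icc (2*k+2) i = Finset.Ioc (2*k+1) i := by
      ext j
      simp only [Finset.mem_Icc, Finset.mem_Ioc]
      omega
    have hcard : ((Finset.Icc 1 p).filter (fun b => T' (2*k+2) b ≤ i)).card = W k c i := by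
      rw [hfe, card_filter_val_Icc (Finset.Icc 1 p) (fun b => T' (2*k+2) b) (2*k+2) i]
      have hs : ∑ j ∈ Finset.Icc (2*k+2) i,
          ((Finset.Icc 1 p).filter (fun b => T' (2*k+2) b = j)).card
          = ∑ j ∈ Finset.Icc (2*k+2) i, c j := by
        refine Finset.sum_congr rfl fun j hj => ?_
        rw [Finset.mem_Icc] at hj
        exact hlastcnt j hj.1 (by omega)
      rw [hs, W, ← hIccIoc]
    have hlow : ∀ b ∈ (Finset.Icc 1 p).filter (fun b => T' (2*k+2) b ≤ i), ∀ b',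
        1 ≤ b' → b' ≤ b → b' ∈ (Finset.Icc 1 p).filter (fun b => T' (2*k+2) b ≤ i) := by
      intro b hb b' h1 h2
      rw [Finset.mem_filter, Finset.mem_Icc] at hb
      rw [Finset.mem_filter, Finset.mem_Icc]
      refine ⟨⟨h1, le_trans h2 hb.1.2⟩, ?_⟩
      have hle : T' (2*k+2) b' ≤ T' (2*k+2) b := hr' (2*k+2) (by rw [Finset.mem_Icc]; omega)
        b' b h1 h2 (by rw [hrp _ (by omega)]; exact hb.1.2)
      omega
    have hlower := lower_eq_Icc p ((Finset.Icc 1 p).filter (fun b => T' (2*k+2) b ≤ i))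
      (Finset.filter_subset _ _) hlow
    rw [hcard] at hlower
    intro b hb1 hb2
    constructor
    · intro h
      have hmem : b ∈ (Finset.Icc 1 p).filter (fun b => T' (2*k+2) b ≤ i) := by
        rw [Finset.mem_filter, Finset.mem_Icc]
        exact ⟨⟨hb1, hb2⟩, h⟩
      rw [hlower, Finset.mem_Icc] at hmem
      exact hmem.2
    · intro h
      have hmem : b ∈ Finset.Icc 1 (W k c i) := by
        rw [Finset.mem_Icc]
        exact ⟨hb1, h⟩
      rw [← hlower, Finset.mem_filter] at hmem
      exact hmem.2
  have hlastval : ∀ b, 1 ≤ b → b ≤ p → T' (2*k+2) b = g k c b := by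
    intro b hb1 hb2
    have hv1 := hge (2*k+2) (by omega) (by omega) b hb1 (by rw [hrp _ (by omega)]; exact hb2)
    have hv2 := (hb' (2*k+2) (by rw [Finset.mem_Icc]; omega) b
      (by rw [Finset.mem_Icc, hrp _ (by omega)]; exact ⟨hb1, hb2⟩)).2
    have h1 : b ≤ W k c (T' (2*k+2) b) := (hZ _ hv1 hv2 b hb1 hb2).mp le_rfl
    have h2 : g k c b ≤ T' (2*k+2) b := (g_le_iff hn hlam hb2 hv1).mpr h1
    have hg := g_mem hn hlam hb2
    have h3 : T' (2*k+2) b ≤ g k c b := (hZ (g k c b) hg.1 hg.2.2 b hb1 hb2).mpr hg.2.1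
    omega
  -- conclusion
  intro a ha b hb
  rw [Finset.mem_Icc] at ha hb
  by_cases h2k : a ≤ 2*k
  · have hbl : b ≤ l := by
      have := hb.2
      rw [hrl a h2k] at this
      exact this
    have hYm : Yf l T' a = m l c a := by
      have h1 := hYval a h2k
      have h2 := m_add hp hbd hsum hlam (by omega : a ≤ 2*k+1)
      omega
    have hmcond := m_add hp hbd hsum hlam (by omega : a ≤ 2*k+1)
    by_cases hcb : b ≤ Yf l T' a
    · have hTa : T' a b = a := (hYthr a ha.1 h2k b hb.1 hbl).mpr hcb
      rw [hTa, Tab, if_pos h2k,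
        if_pos ((Tab_cond hp hbd hsum hlam (by omega : a ≤ 2*k+1)).mpr (by omega))]
    · have hd1 := hge a ha.1 (by omega) b hb.1 hb.2
      have hd2 := hub2 a ha.1 h2k b hb.1 hbl
      have hd3 : ¬ T' a b = a := fun hcon => hcb ((hYthr a ha.1 h2k b hb.1 hbl).mp hcon)
      have hTa : T' a b = a + 1 := by omega
      rw [hTa, Tab, if_pos h2k, if_neg (fun hcon => hcb (by
        have := (Tab_cond hp hbd hsum hlam (by omega : a ≤ 2*k+1)).mp hcon
        omega))]
  · by_cases h21 : a = 2*k+1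
    · subst h21
      have hbp : b ≤ p := by
        have := hb.2
        rw [hrp _ (by omega)] at this
        exact this
      rw [hmid' b hb.1 hbp, Tab, if_neg (by omega), if_pos rfl]
    · have h22 : a = 2*k+2 := by omega
      subst h22
      have hbp : b ≤ p := by
        have := hb.2
        rw [hrp _ (by omega)] at this
        exact this
      rw [hlastval b hb.1 hbp, Tab, if_neg (by omega), if_neg (by omega)]

end Uniq

end Stmt1Aux

/-- If `Λ = p`, there is exactly one semistandard Young tableau of shape
`ϱ = (ℓ^{2k}, p, p)` with content `μ = (c 1, ..., c n)`, and it is proper. -/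
theorem stmt1 (l k p n : ℕ) (c : ℕ → ℕ)
    (hl : 1 ≤ l) (hp : 1 ≤ p) (hpl : p ≤ l)
    (hbd : ∀ i : ℕ, 1 ≤ i → i ≤ n → c i ≤ l)
    (hmono : ∀ i j : ℕ, 1 ≤ i → i ≤ j → j ≤ n → c j ≤ c i)
    (hsum : ∑ i ∈ Finset.Icc 1 n, c i = 2 * (k * l + p))
    (hlam : ∑ i ∈ Finset.Icc (2 * k + 2) n, c i = p) :
    ∃ T : ℕ → ℕ → ℕ, IsRhoSSYT l k p n c T ∧ IsProper l k T ∧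
      ∀ T' : ℕ → ℕ → ℕ, IsRhoSSYT l k p n c T' →
        EqOnShape (2 * k + 2) (rhoRow l k p) T' T := by
  exact ⟨Stmt1Aux.Tab l k c, Stmt1Aux.Tab_is hl hp hpl hbd hsum hlam,
    Stmt1Aux.Tab_proper hl hp hpl hbd hsum hlam,
    fun T' hT' => Stmt1Aux.Tab_unique hl hp hpl hbd hsum hlam T' hT'⟩
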